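/- Let f : ℝ_{>0}^n → ℝ, f(x) = ∑_{μ ∈ σ(f)} c_μ x^μ be a signomial whose support has a separating hyperplane H_{v,a}, and let R ⊆ σ(f) be a subset with σ_-(f) ⊆ R and H_{v,a} ∩ σ_+(f) ⊆ R. Then the map sending a connected component U of f|_R^{-1}(ℝ_{<0}) to the connected component of f^{-1}(ℝ_{<0}) containing U ∩ f^{-1}(ℝ_{<0}) is a well-defined bijection between the set of connected components of f|_R^{-1}(ℝ_{<0}) and the set of connected components of f^{-1}(ℝ_{<0}); in particular, f|_R^{-1}(ℝ_{<0}) and f^{-1}(ℝ_{<0}) have the same number of connected components. -/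

import Mathlib

open Finset

/-- The signomial `x ↦ ∑_{μ ∈ S} c μ * x^μ` (with real exponents, via `Real.rpow`). -/
noncomputable def sig {n : ℕ} (S : Finset (Fin n → ℝ)) (c : (Fin n → ℝ) → ℝ)
    (x : Fin n → ℝ) : ℝ :=
  ∑ μ ∈ S, c μ * ∏ i, x i ^ μ i

open Classical in
/-- The restriction `f|_F` of the signomial to a subset `F ⊆ ℝⁿ` of exponent vectors. -/
noncomputable def sigOn {n : ℕ} (S : Finset (Fin n → ℝ)) (c : (Fin n → ℝ) → ℝ)
    (F : Set (Fin n → ℝ)) (x : Fin n → ℝ) : ℝ :=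
  ∑ μ ∈ S, if μ ∈ F then c μ * ∏ i, x i ^ μ i else 0

/-- `f⁻¹(ℝ_{<0})`: the points of the positive orthant where the signomial is negative. -/
def negSet {n : ℕ} (S : Finset (Fin n → ℝ)) (c : (Fin n → ℝ) → ℝ) : Set (Fin n → ℝ) :=
  {x | (∀ i, 0 < x i) ∧ sig S c x < 0}

/-- `(f|_F)⁻¹(ℝ_{<0})`. -/
def negSetOn {n : ℕ} (S : Finset (Fin n → ℝ)) (c : (Fin n → ℝ) → ℝ)
    (F : Set (Fin n → ℝ)) : Set (Fin n → ℝ) :=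
  {x | (∀ i, 0 < x i) ∧ sigOn S c F x < 0}

/-- `σ₊(f)`: the positive exponent vectors. -/
def sigPos' {n : ℕ} (S : Finset (Fin n → ℝ)) (c : (Fin n → ℝ) → ℝ) : Set (Fin n → ℝ) :=
  {μ | μ ∈ S ∧ 0 < c μ}

/-- `σ₋(f)`: the negative exponent vectors. -/
def sigNeg' {n : ℕ} (S : Finset (Fin n → ℝ)) (c : (Fin n → ℝ) → ℝ) : Set (Fin n → ℝ) :=
  {μ | μ ∈ S ∧ c μ < 0}

/-- The hyperplane `H_{v,a}`. -/
def Hyp {n : ℕ} (v : Fin n → ℝ) (a : ℝ) : Set (Fin n → ℝ) :=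
  {μ | ∑ i, v i * μ i = a}

/-- The closed half-space `H⁺_{v,a}`. -/
def Hplus {n : ℕ} (v : Fin n → ℝ) (a : ℝ) : Set (Fin n → ℝ) :=
  {μ | a ≤ ∑ i, v i * μ i}

/-- The closed half-space `H⁻_{v,a}`. -/
def Hminus {n : ℕ} (v : Fin n → ℝ) (a : ℝ) : Set (Fin n → ℝ) :=
  {μ | ∑ i, v i * μ i ≤ a}

/-- The open half-space `H^{+,∘}_{v,a}`. -/
def HplusO {n : ℕ} (v : Fin n → ℝ) (a : ℝ) : Set (Fin n → ℝ) :=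
  {μ | a < ∑ i, v i * μ i}

/-- The open half-space `H^{-,∘}_{v,a}`. -/
def HminusO {n : ℕ} (v : Fin n → ℝ) (a : ℝ) : Set (Fin n → ℝ) :=
  {μ | ∑ i, v i * μ i < a}

/-- `U` is a connected component of `X` (a maximal nonempty preconnected subset of `X`). -/
def IsConnComp {n : ℕ} (X U : Set (Fin n → ℝ)) : Prop :=
  U.Nonempty ∧ U ⊆ X ∧ IsPreconnected U ∧
    ∀ W, U ⊆ W → W ⊆ X → IsPreconnected W → W = U

/-- The number (cardinality) of connected components of `X`. -/
noncomputable def compCard {n : ℕ} (X : Set (Fin n → ℝ)) : Cardinal :=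
  Cardinal.mk {U : Set (Fin n → ℝ) // IsConnComp X U}

/-- The face `N(f)_v` of the Newton polytope of a signomial with support `S`,
with outer normal vector `v`. -/
def faceOf {n : ℕ} (S : Finset (Fin n → ℝ)) (v : Fin n → ℝ) : Set (Fin n → ℝ) :=
  {ω ∈ convexHull ℝ (↑S : Set (Fin n → ℝ)) |
    ∀ μ ∈ convexHull ℝ (↑S : Set (Fin n → ℝ)), ∑ i, v i * μ i ≤ ∑ i, v i * ω i}


namespace Stmt4Aux
variable {n : ℕ}

def dotv (v μ : Fin n → ℝ) : ℝ := ∑ i, v i * μ i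

noncomputable def mono (x μ : Fin n → ℝ) : ℝ := ∏ i, x i ^ μ i

noncomputable def flow (v x : Fin n → ℝ) (t : ℝ) : Fin n → ℝ := fun i => t ^ v i * x i

noncomputable def hfun (F : Finset (Fin n → ℝ)) (c : (Fin n → ℝ) → ℝ) (v : Fin n → ℝ)
    (a : ℝ) (x : Fin n → ℝ) (t : ℝ) : ℝ :=
  ∑ μ ∈ F, c μ * mono x μ * t ^ (dotv v μ - a)

lemma mono_pos {x : Fin n → ℝ} (hx : ∀ i, 0 < x i) (μ : Fin n → ℝ) : 0 < mono x μ :=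
  Finset.prod_pos fun i _ => Real.rpow_pos_of_pos (hx i) _

lemma rpow_sum' {ι : Type*} (s : Finset ι) {t : ℝ} (ht : 0 < t) (f : ι → ℝ) :
    t ^ (∑ i ∈ s, f i) = ∏ i ∈ s, t ^ f i := by
  induction s using Finset.cons_induction with
  | empty => simp
  | cons i s hi ih => rw [Finset.sum_cons, Finset.prod_cons, Real.rpow_add ht, ih]

lemma flow_pos (v : Fin n → ℝ) {x : Fin n → ℝ} (hx : ∀ i, 0 < x i) {t : ℝ} (ht : 0 < t) :
    ∀ i, 0 < flow v x t i := fun i => mul_pos (Real.rpow_pos_of_pos ht _) (hx i)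

lemma flow_one (v x : Fin n → ℝ) : flow v x 1 = x := by
  funext i; simp [flow]

lemma mono_flow {v x : Fin n → ℝ} (hx : ∀ i, 0 < x i) {t : ℝ} (ht : 0 < t) (μ : Fin n → ℝ) :
    mono (flow v x t) μ = t ^ dotv v μ * mono x μ := by
  unfold mono flow dotv
  rw [rpow_sum' _ ht, ← Finset.prod_mul_distrib]
  refine Finset.prod_congr rfl fun i _ => ?_
  rw [Real.mul_rpow (Real.rpow_nonneg ht.le _) (hx i).le, ← Real.rpow_mul ht.le]

lemma sig_flow (F : Finset (Fin n → ℝ)) (c : (Fin n → ℝ) → ℝ) {v x : Fin n → ℝ}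
    (hx : ∀ i, 0 < x i) {t : ℝ} (ht : 0 < t) (a : ℝ) :
    sig F c (flow v x t) = t ^ a * hfun F c v a x t := by
  unfold sig hfun
  rw [Finset.mul_sum]
  refine Finset.sum_congr rfl fun μ _ => ?_
  have h1 : (∏ i, flow v x t i ^ μ i) = t ^ dotv v μ * mono x μ := mono_flow hx ht μ
  have h2 : t ^ a * t ^ (dotv v μ - a) = t ^ dotv v μ := by
    rw [← Real.rpow_add ht]; ring_nf
  rw [h1, ← h2]; ring

lemma hfun_one (F : Finset (Fin n → ℝ)) (c : (Fin n → ℝ) → ℝ) (v : Fin n → ℝ) (a : ℝ)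
    (x : Fin n → ℝ) : hfun F c v a x 1 = sig F c x := by
  unfold hfun sig mono; simp

def Good (F : Finset (Fin n → ℝ)) (c : (Fin n → ℝ) → ℝ) (v : Fin n → ℝ) (a : ℝ) : Prop :=
  ∀ μ ∈ F, (0 < c μ → dotv v μ ≤ a) ∧ (c μ < 0 → a ≤ dotv v μ)

lemma hfun_anti {F : Finset (Fin n → ℝ)} {c : (Fin n → ℝ) → ℝ} {v : Fin n → ℝ} {a : ℝ}
    (hg : Good F c v a) {x : Fin n → ℝ} (hx : ∀ i, 0 < x i) {t₁ t₂ : ℝ}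
    (ht₁ : 0 < t₁) (h12 : t₁ ≤ t₂) :
    hfun F c v a x t₂ ≤ hfun F c v a x t₁ := by
  have ht₂ : 0 < t₂ := lt_of_lt_of_le ht₁ h12
  refine Finset.sum_le_sum fun μ hμ => ?_
  have hm := mono_pos hx μ
  rcases lt_trichotomy (c μ) 0 with hcμ | hcμ | hcμ
  · have he : 0 ≤ dotv v μ - a := sub_nonneg.2 ((hg μ hμ).2 hcμ)
    have ht : t₁ ^ (dotv v μ - a) ≤ t₂ ^ (dotv v μ - a) := Real.rpow_le_rpow ht₁.le h12 he
    exact mul_le_mul_of_nonpos_left ht (mul_nonpos_of_nonpos_of_nonneg hcμ.le hm.le)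
  · simp [hcμ]
  · have he : dotv v μ - a ≤ 0 := sub_nonpos.2 ((hg μ hμ).1 hcμ)
    have ht : t₂ ^ (dotv v μ - a) ≤ t₁ ^ (dotv v μ - a) := by
      rw [show dotv v μ - a = -(a - dotv v μ) by ring, Real.rpow_neg ht₁.le,
        Real.rpow_neg ht₂.le]
      have h0 : 0 < t₁ ^ (a - dotv v μ) := Real.rpow_pos_of_pos ht₁ _
      exact inv_anti₀ h0 (Real.rpow_le_rpow ht₁.le h12 (by linarith))
    exact mul_le_mul_of_nonneg_left ht (mul_nonneg hcμ.le hm.le)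

lemma continuousAt_mono {x : Fin n → ℝ} (hx : ∀ i, 0 < x i) (μ : Fin n → ℝ) :
    ContinuousAt (fun y => mono y μ) x := by
  unfold mono
  refine tendsto_finset_prod _ fun i _ => ?_
  show ContinuousAt (fun y : Fin n → ℝ => y i ^ μ i) x
  have h1 : ContinuousAt (fun r : ℝ => r ^ μ i) (x i) :=
    Real.continuousAt_rpow_const (x i) (μ i) (Or.inl (hx i).ne')
  exact ContinuousAt.comp (f := fun y : Fin n → ℝ => y i) h1 (continuous_apply i).continuousAt

lemma continuousAt_hfun (F : Finset (Fin n → ℝ)) (c : (Fin n → ℝ) → ℝ) (v : Fin n → ℝ)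
    (a : ℝ) (t : ℝ) {x : Fin n → ℝ} (hx : ∀ i, 0 < x i) :
    ContinuousAt (fun y => hfun F c v a y t) x := by
  unfold hfun
  exact tendsto_finset_sum _ fun μ _ =>
    ((continuousAt_const.mul (continuousAt_mono hx μ)).mul continuousAt_const)

lemma continuousAt_sig (F : Finset (Fin n → ℝ)) (c : (Fin n → ℝ) → ℝ) {x : Fin n → ℝ}
    (hx : ∀ i, 0 < x i) : ContinuousAt (sig F c) x := by
  have : sig F c = fun y => hfun F c 0 0 y 1 := by
    funext y; rw [hfun_one]
  rw [this]
  exact continuousAt_hfun F c 0 0 1 hx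

lemma isOpen_orthant : IsOpen {y : Fin n → ℝ | ∀ i, 0 < y i} := by
  have : {y : Fin n → ℝ | ∀ i, 0 < y i} = ⋂ i, (fun y : Fin n → ℝ => y i) ⁻¹' Set.Ioi 0 := by
    ext y; simp
  rw [this]
  exact isOpen_iInter_of_finite fun i => isOpen_Ioi.preimage (continuous_apply i)

lemma isOpen_negSet (F : Finset (Fin n → ℝ)) (c : (Fin n → ℝ) → ℝ) : IsOpen (negSet F c) := by
  rw [isOpen_iff_mem_nhds]
  rintro x ⟨hx, hneg⟩
  have h1 : {y : Fin n → ℝ | ∀ i, 0 < y i} ∈ nhds x := isOpen_orthant.mem_nhds hx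
  have h2 : sig F c ⁻¹' Set.Iio 0 ∈ nhds x :=
    (continuousAt_sig F c hx).preimage_mem_nhds (Iio_mem_nhds hneg)
  exact Filter.mem_of_superset (Filter.inter_mem h1 h2) fun y hy => ⟨hy.1, hy.2⟩

variable {c : (Fin n → ℝ) → ℝ} {v : Fin n → ℝ} {a : ℝ}

lemma flow_mem_negSet {F : Finset (Fin n → ℝ)} {x : Fin n → ℝ} (hx : ∀ i, 0 < x i)
    {t : ℝ} (ht : 0 < t) (hneg : hfun F c v a x t < 0) : flow v x t ∈ negSet F c :=
  ⟨flow_pos v hx ht, by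
    rw [sig_flow F c hx ht a]
    exact mul_neg_of_pos_of_neg (Real.rpow_pos_of_pos ht a) hneg⟩

lemma continuousOn_flow (x : Fin n → ℝ) {t₁ t₂ : ℝ} (ht₁ : 0 < t₁) :
    ContinuousOn (fun t => flow v x t) (Set.Icc t₁ t₂) := by
  intro t ht
  have htpos : 0 < t := lt_of_lt_of_le ht₁ ht.1
  apply ContinuousAt.continuousWithinAt
  apply continuousAt_pi.2
  intro i
  exact (Real.continuousAt_rpow_const t (v i) (Or.inl htpos.ne')).mul continuousAt_const

lemma joined_flow {F : Finset (Fin n → ℝ)} (hg : Good F c v a) {x : Fin n → ℝ}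
    (hx : ∀ i, 0 < x i) {t₁ t₂ : ℝ} (ht₁ : 0 < t₁) (h12 : t₁ ≤ t₂)
    (hneg : hfun F c v a x t₁ < 0) :
    flow v x t₂ ∈ connectedComponentIn (negSet F c) (flow v x t₁) := by
  have hK : IsPreconnected ((fun t => flow v x t) '' Set.Icc t₁ t₂) :=
    isPreconnected_Icc.image _ (continuousOn_flow x ht₁)
  have hKsub : (fun t => flow v x t) '' Set.Icc t₁ t₂ ⊆ negSet F c := by
    rintro _ ⟨t, ht, rfl⟩
    have htpos : 0 < t := lt_of_lt_of_le ht₁ ht.1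
    exact flow_mem_negSet hx htpos (lt_of_le_of_lt (hfun_anti hg hx ht₁ ht.1) hneg)
  have h1 : flow v x t₁ ∈ (fun t => flow v x t) '' Set.Icc t₁ t₂ :=
    ⟨t₁, ⟨le_refl _, h12⟩, rfl⟩
  have h2 : flow v x t₂ ∈ (fun t => flow v x t) '' Set.Icc t₁ t₂ :=
    ⟨t₂, ⟨h12, le_refl _⟩, rfl⟩
  exact hK.subset_connectedComponentIn h1 hKsub h2

lemma exists_T {S R : Finset (Fin n → ℝ)} (hg : Good S c v a) (hRS : R ⊆ S)
    (htail : ∀ μ ∈ S, μ ∉ R → 0 < c μ ∧ dotv v μ < a) {x : Fin n → ℝ}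
    (hx : x ∈ negSet R c) : ∃ T, 1 ≤ T ∧ hfun S c v a x T < 0 := by
  obtain ⟨hxp, hxneg⟩ := hx
  have hgR : Good R c v a := fun μ hμ => hg μ (hRS hμ)
  have hsplit : ∀ t : ℝ, hfun S c v a x t =
      hfun R c v a x t + ∑ μ ∈ S \ R, c μ * mono x μ * t ^ (dotv v μ - a) := by
    intro t
    rw [hfun, ← Finset.sum_sdiff hRS]
    rw [add_comm]; rfl
  have htend : Filter.Tendsto (fun t : ℝ => ∑ μ ∈ S \ R, c μ * mono x μ * t ^ (dotv v μ - a))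
      Filter.atTop (nhds 0) := by
    have : Filter.Tendsto (fun t : ℝ => ∑ μ ∈ S \ R, c μ * mono x μ * t ^ (dotv v μ - a))
        Filter.atTop (nhds (∑ μ ∈ S \ R, (0:ℝ))) := by
      refine tendsto_finset_sum _ fun μ hμ => ?_
      obtain ⟨hμS, hμR⟩ := Finset.mem_sdiff.1 hμ
      have hlt : dotv v μ - a < 0 := sub_neg.2 (htail μ hμS hμR).2
      have h0 : Filter.Tendsto (fun t : ℝ => t ^ (dotv v μ - a)) Filter.atTop (nhds 0) := by
        have := tendsto_rpow_neg_atTop (by linarith : (0:ℝ) < -(dotv v μ - a))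
        simpa using this
      have := h0.const_mul (c μ * mono x μ)
      simpa using this
    simpa using this
  have hev : ∀ᶠ t in Filter.atTop,
      (∑ μ ∈ S \ R, c μ * mono x μ * t ^ (dotv v μ - a)) < -(sig R c x) :=
    htend.eventually_lt_const (by linarith)
  obtain ⟨T, hT⟩ := (hev.and (Filter.eventually_ge_atTop (1:ℝ))).exists
  refine ⟨T, hT.2, ?_⟩
  have hR1 : hfun R c v a x T ≤ hfun R c v a x 1 :=
    hfun_anti hgR hxp one_pos hT.2
  rw [hfun_one] at hR1
  rw [hsplit T]
  linarith [hT.1]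

lemma continuous_flowT (v : Fin n → ℝ) (T : ℝ) : Continuous (fun z : Fin n → ℝ => flow v z T) :=
  continuous_pi fun i => continuous_const.mul (continuous_apply i)

lemma key {S R : Finset (Fin n → ℝ)} (hg : Good S c v a) (hRS : R ⊆ S)
    (htail : ∀ μ ∈ S, μ ∉ R → 0 < c μ ∧ dotv v μ < a)
    (hsub : negSet S c ⊆ negSet R c)
    {x y : Fin n → ℝ} (hxS : x ∈ negSet S c) (hyS : y ∈ negSet S c)
    (hxy : y ∈ connectedComponentIn (negSet R c) x) :
    connectedComponentIn (negSet S c) x = connectedComponentIn (negSet S c) y := by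
  classical
  have hxR : x ∈ negSet R c := hsub hxS
  set U : Set (Fin n → ℝ) := connectedComponentIn (negSet R c) x with hU
  have hUopen : IsOpen U := (isOpen_negSet R c).connectedComponentIn
  have hUsub : U ⊆ negSet R c := connectedComponentIn_subset _ _
  obtain ⟨T₀, hT₀1, hT₀neg⟩ := exists_T hg hRS htail hxR
  have hT₀pos : (0:ℝ) < T₀ := by linarith
  have hz₀S : flow v x T₀ ∈ negSet S c := flow_mem_negSet hxS.1 hT₀pos hT₀neg
  set V : Set (Fin n → ℝ) := connectedComponentIn (negSet S c) (flow v x T₀) with hV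
  set A : Set (Fin n → ℝ) :=
    {w | w ∈ U ∧ ∃ T, 1 ≤ T ∧ hfun S c v a w T < 0 ∧ flow v w T ∈ V} with hA
  -- helper: balls inside U on which hfun · T is negative
  have hball : ∀ w ∈ U, ∀ T : ℝ, hfun S c v a w T < 0 →
      ∃ ε > 0, Metric.ball w ε ⊆ U ∧ ∀ z ∈ Metric.ball w ε, hfun S c v a z T < 0 := by
    intro w hwU T hwT
    have hwpos : ∀ i, 0 < w i := (hUsub hwU).1
    have hcont : ContinuousAt (fun z => hfun S c v a z T) w := continuousAt_hfun S c v a T hwpos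
    have h1 : (fun z => hfun S c v a z T) ⁻¹' Set.Iio 0 ∈ nhds w :=
      hcont.preimage_mem_nhds (Iio_mem_nhds hwT)
    have h2 : U ∈ nhds w := hUopen.mem_nhds hwU
    obtain ⟨ε, hε, hball⟩ := Metric.mem_nhds_iff.1 (Filter.inter_mem h2 h1)
    exact ⟨ε, hε, fun z hz => (hball hz).1, fun z hz => (hball hz).2⟩
  -- helper: image of a ball inside U under flow · T lands in one component of negSet S
  have himg : ∀ (w : Fin n → ℝ) (ε T : ℝ), 1 ≤ T → Metric.ball w ε ⊆ U →
      (∀ z ∈ Metric.ball w ε, hfun S c v a z T < 0) →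
      ∀ z₁ ∈ Metric.ball w ε, ∀ z₂ ∈ Metric.ball w ε,
        flow v z₂ T ∈ connectedComponentIn (negSet S c) (flow v z₁ T) := by
    intro w ε T hT1 hBU hBneg z₁ hz₁ z₂ hz₂
    have hTpos : (0:ℝ) < T := by linarith
    have hpre : IsPreconnected ((fun z : Fin n → ℝ => flow v z T) '' Metric.ball w ε) :=
      ((convex_ball w ε).isPreconnected).image _ (continuous_flowT v T).continuousOn
    have hsubS : (fun z : Fin n → ℝ => flow v z T) '' Metric.ball w ε ⊆ negSet S c := by
      rintro _ ⟨z, hz, rfl⟩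
      exact flow_mem_negSet ((hUsub (hBU hz)).1) hTpos (hBneg z hz)
    exact hpre.subset_connectedComponentIn ⟨z₁, hz₁, rfl⟩ hsubS ⟨z₂, hz₂, rfl⟩
  have hAopen : IsOpen A := by
    rw [Metric.isOpen_iff]
    rintro w ⟨hwU, T, hT1, hTneg, hTV⟩
    obtain ⟨ε, hε, hBU, hBneg⟩ := hball w hwU T hTneg
    refine ⟨ε, hε, fun z hz => ?_⟩
    refine ⟨hBU hz, T, hT1, hBneg z hz, ?_⟩
    have h1 : flow v z T ∈ connectedComponentIn (negSet S c) (flow v w T) :=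
      himg w ε T hT1 hBU hBneg w (Metric.mem_ball_self hε) z hz
    rw [hV, connectedComponentIn_eq hTV]
    exact h1
  have hCopen : IsOpen (U \ A) := by
    rw [Metric.isOpen_iff]
    rintro w ⟨hwU, hwA⟩
    obtain ⟨T, hT1, hTneg⟩ := exists_T hg hRS htail (hUsub hwU)
    obtain ⟨ε, hε, hBU, hBneg⟩ := hball w hwU T hTneg
    refine ⟨ε, hε, fun z hz => ⟨hBU hz, fun hzA => hwA ?_⟩⟩
    obtain ⟨hzU, T', hT'1, hT'neg, hT'V⟩ := hzA
    have hzpos : ∀ i, 0 < z i := (hUsub hzU).1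
    have ht₁pos : (0:ℝ) < min T T' := lt_min (by linarith) (by linarith)
    have ht₁neg : hfun S c v a z (min T T') < 0 := by
      rcases min_cases T T' with h | h
      · rw [h.1]; exact hBneg z hz
      · rw [h.1]; exact hT'neg
    have c1 : flow v z T ∈ connectedComponentIn (negSet S c) (flow v z (min T T')) :=
      joined_flow hg hzpos ht₁pos (min_le_left _ _) ht₁neg
    have c2 : flow v z T' ∈ connectedComponentIn (negSet S c) (flow v z (min T T')) :=
      joined_flow hg hzpos ht₁pos (min_le_right _ _) ht₁neg
    have hzTV : flow v z T ∈ V := by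
      rw [hV, connectedComponentIn_eq hT'V, ← connectedComponentIn_eq c2]
      exact c1
    have hwTV : flow v w T ∈ V := by
      rw [hV, connectedComponentIn_eq hzTV]
      exact himg w ε T hT1 hBU hBneg z hz w (Metric.mem_ball_self hε)
    exact ⟨hwU, T, hT1, hBneg w (Metric.mem_ball_self hε), hwTV⟩
  -- x ∈ A
  have hxA : x ∈ A :=
    ⟨mem_connectedComponentIn hxR, T₀, hT₀1, hT₀neg, mem_connectedComponentIn hz₀S⟩
  -- y ∈ A by preconnectedness of U
  have hyA : y ∈ A := by
    by_contra hyA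
    have hP : IsPreconnected U := isPreconnected_connectedComponentIn
    obtain ⟨w, hwU, hw⟩ := hP A (U \ A) hAopen hCopen
      (fun w hw => if h : w ∈ A then Or.inl h else Or.inr ⟨hw, h⟩)
      ⟨x, mem_connectedComponentIn hxR, hxA⟩ ⟨y, hxy, hxy, hyA⟩
    exact hw.2.2 hw.1
  obtain ⟨_, Ty, hTy1, hTyneg, hTyV⟩ := hyA
  have hTypos : (0:ℝ) < Ty := by linarith
  have cx : flow v x T₀ ∈ connectedComponentIn (negSet S c) x := by
    have := joined_flow hg hxS.1 one_pos hT₀1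
      (by rw [hfun_one]; exact hxS.2)
    rwa [flow_one] at this
  have cy : flow v y Ty ∈ connectedComponentIn (negSet S c) y := by
    have := joined_flow hg hyS.1 one_pos hTy1
      (by rw [hfun_one]; exact hyS.2)
    rwa [flow_one] at this
  rw [connectedComponentIn_eq cx, connectedComponentIn_eq cy]
  exact connectedComponentIn_eq
    (show flow v y Ty ∈ connectedComponentIn (negSet S c) (flow v x T₀) from hTyV)

lemma isConnComp_connectedComponentIn {X : Set (Fin n → ℝ)} {x : Fin n → ℝ} (hx : x ∈ X) :
    IsConnComp X (connectedComponentIn X x) :=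
  ⟨⟨x, mem_connectedComponentIn hx⟩, connectedComponentIn_subset _ _,
   isPreconnected_connectedComponentIn, fun W hUW hWX hW =>
     subset_antisymm (hW.subset_connectedComponentIn (hUW (mem_connectedComponentIn hx)) hWX)
       hUW⟩

lemma eq_connectedComponentIn_of_isConnComp {X U : Set (Fin n → ℝ)} (h : IsConnComp X U)
    {x : Fin n → ℝ} (hx : x ∈ U) : U = connectedComponentIn X x := by
  refine (h.2.2.2 (connectedComponentIn X x) ?_ (connectedComponentIn_subset _ _)
    isPreconnected_connectedComponentIn).symm
  exact h.2.2.1.subset_connectedComponentIn hx h.2.1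

end Stmt4Aux

open Stmt4Aux in
/-- Proposition 2.4(ii). -/
theorem stmt_4 (n : ℕ) (S : Finset (Fin n → ℝ)) (c : (Fin n → ℝ) → ℝ)
    (hc : ∀ μ ∈ S, c μ ≠ 0)
    (v : Fin n → ℝ) (hv : v ≠ 0) (a : ℝ)
    (hsepneg : sigNeg' S c ⊆ Hplus v a) (hseppos : sigPos' S c ⊆ Hminus v a)
    (R : Finset (Fin n → ℝ)) (hRS : R ⊆ S)
    (hRneg : sigNeg' S c ⊆ ↑R)
    (hRpos : Hyp v a ∩ sigPos' S c ⊆ ↑R) :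
    ∃ φ : {U : Set (Fin n → ℝ) // IsConnComp (negSet R c) U} →
          {V : Set (Fin n → ℝ) // IsConnComp (negSet S c) V},
      (∀ U, U.1 ∩ negSet S c ⊆ (φ U).1) ∧
      Function.Bijective φ ∧
      compCard (negSet R c) = compCard (negSet S c) := by
  classical
  have hg : Good S c v a := fun μ hμ =>
    ⟨fun hp => hseppos ⟨hμ, hp⟩, fun hn => hsepneg ⟨hμ, hn⟩⟩
  have hgR : Good R c v a := fun μ hμ => hg μ (hRS hμ)
  have htail : ∀ μ ∈ S, μ ∉ R → 0 < c μ ∧ dotv v μ < a := by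
    intro μ hμ hμR
    have hcpos : 0 < c μ := by
      rcases (hc μ hμ).lt_or_gt with h | h
      · exact absurd (hRneg ⟨hμ, h⟩) hμR
      · exact h
    refine ⟨hcpos, lt_of_le_of_ne ((hg μ hμ).1 hcpos) ?_⟩
    intro heq
    exact hμR (hRpos ⟨heq, hμ, hcpos⟩)
  have hsub : negSet S c ⊆ negSet R c := by
    rintro x ⟨hxp, hneg⟩
    refine ⟨hxp, lt_of_le_of_lt ?_ hneg⟩
    have hsplit : sig S c x = sig R c x + ∑ μ ∈ S \ R, c μ * mono x μ := by
      show (∑ μ ∈ S, c μ * mono x μ) = (∑ μ ∈ R, c μ * mono x μ) + _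
      rw [← Finset.sum_sdiff hRS, add_comm]
    have hnn : 0 ≤ ∑ μ ∈ S \ R, c μ * mono x μ :=
      Finset.sum_nonneg fun μ hμ => by
        obtain ⟨hμS, hμR⟩ := Finset.mem_sdiff.1 hμ
        exact (mul_pos (htail μ hμS hμR).1 (mono_pos hxp μ)).le
    linarith [hsplit]
  -- each component of negSet R contains a point of negSet S
  have hland : ∀ x ∈ negSet R c, ∃ z, z ∈ connectedComponentIn (negSet R c) x ∧
      z ∈ negSet S c := by
    intro x hx
    obtain ⟨T, hT1, hTneg⟩ := exists_T hg hRS htail hx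
    have hTpos : (0:ℝ) < T := by linarith
    refine ⟨flow v x T, ?_, flow_mem_negSet hx.1 hTpos hTneg⟩
    have hRneg1 : hfun R c v a x 1 < 0 := by rw [hfun_one]; exact hx.2
    have := joined_flow hgR hx.1 one_pos hT1 hRneg1
    rwa [flow_one] at this
  have hchoice : ∀ U : {U : Set (Fin n → ℝ) // IsConnComp (negSet R c) U},
      ∃ z, z ∈ U.1 ∧ z ∈ negSet S c := by
    rintro ⟨U, hU⟩
    obtain ⟨x, hx⟩ := hU.1
    obtain ⟨z, hz1, hz2⟩ := hland x (hU.2.1 hx)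
    refine ⟨z, ?_, hz2⟩
    show z ∈ U
    rw [eq_connectedComponentIn_of_isConnComp hU hx]
    exact hz1
  choose z hzU hzS using hchoice
  have hprop : ∀ U : {U : Set (Fin n → ℝ) // IsConnComp (negSet R c) U},
      U.1 ∩ negSet S c ⊆ connectedComponentIn (negSet S c) (z U) := by
    rintro U w ⟨hwU, hwS⟩
    have hw : w ∈ connectedComponentIn (negSet R c) (z U) := by
      rw [← eq_connectedComponentIn_of_isConnComp U.2 (hzU U)]
      exact hwU
    have hk := key hg hRS htail hsub (hzS U) hwS hw
    rw [hk]
    exact mem_connectedComponentIn hwS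
  set φ : {U : Set (Fin n → ℝ) // IsConnComp (negSet R c) U} →
      {V : Set (Fin n → ℝ) // IsConnComp (negSet S c) V} :=
    fun U => ⟨connectedComponentIn (negSet S c) (z U),
      isConnComp_connectedComponentIn (hzS U)⟩ with hφ
  have hφ1 : ∀ U, (φ U).1 = connectedComponentIn (negSet S c) (z U) := fun U => rfl
  have hinj : Function.Injective φ := by
    intro U₁ U₂ hEq
    have h1 : z U₁ ∈ (φ U₁).1 := by
      rw [hφ1]; exact mem_connectedComponentIn (hzS U₁)
    have h2 : z U₂ ∈ (φ U₁).1 := by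
      rw [hEq, hφ1]; exact mem_connectedComponentIn (hzS U₂)
    have hVsub : (φ U₁).1 ⊆ negSet R c := fun w hw => hsub ((φ U₁).2.2.1 hw)
    have hVpre : IsPreconnected (φ U₁).1 := (φ U₁).2.2.2.1
    have e1 : U₁.1 = connectedComponentIn (negSet R c) (z U₁) :=
      eq_connectedComponentIn_of_isConnComp U₁.2 (hzU U₁)
    have e2 : U₂.1 = connectedComponentIn (negSet R c) (z U₂) :=
      eq_connectedComponentIn_of_isConnComp U₂.2 (hzU U₂)
    have s1 : (φ U₁).1 ⊆ connectedComponentIn (negSet R c) (z U₁) :=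
      hVpre.subset_connectedComponentIn h1 hVsub
    have hz2 : z U₂ ∈ connectedComponentIn (negSet R c) (z U₁) := s1 h2
    apply Subtype.ext
    rw [e1, e2]
    exact connectedComponentIn_eq hz2
  have hsurj : Function.Surjective φ := by
    intro V
    obtain ⟨xv, hxv⟩ := V.2.1
    have hxvS : xv ∈ negSet S c := V.2.2.1 hxv
    have hxvR : xv ∈ negSet R c := hsub hxvS
    refine ⟨⟨connectedComponentIn (negSet R c) xv, isConnComp_connectedComponentIn hxvR⟩, ?_⟩
    set U : {U : Set (Fin n → ℝ) // IsConnComp (negSet R c) U} :=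
      ⟨connectedComponentIn (negSet R c) xv, isConnComp_connectedComponentIn hxvR⟩
    have hx : xv ∈ (φ U).1 := by
      rw [hφ1]
      exact hprop U ⟨mem_connectedComponentIn hxvR, hxvS⟩
    apply Subtype.ext
    have e2 : V.1 = connectedComponentIn (negSet S c) xv :=
      eq_connectedComponentIn_of_isConnComp V.2 hxv
    rw [hφ1, e2]
    exact connectedComponentIn_eq (by rw [hφ1] at hx; exact hx)
  refine ⟨φ, ?_, ⟨hinj, hsurj⟩, ?_⟩
  · intro U
    rw [hφ1]
    exact hprop U
  · exact Cardinal.mk_congr (Equiv.ofBijective φ ⟨hinj, hsurj⟩)
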